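/- Let X be a Banach space, and let [·]'_ε denote the set derivation associated with a collection 𝒜 of open subsets of X stable under dilations and translations: [C]'_ε = C \ ⋃{A ∈ 𝒜 : diam(A ∩ C) < ε}. Then for every ε ∈ (0,1], every λ ∈ (0,1), and the first derivation step, λ·[B_X]'_ε + (1−λ)·B_X ⊆ [B_X]'_{λε}, where B_X is the closed unit ball. -/

import Mathlib

open scoped Pointwise

/-- For a collection `𝒜` of open sets stable under translations and positive dilations,
the associated derivation of the unit ball satisfies
`λ • [B_X]'_ε + (1-λ) • B_X ⊆ [B_X]'_{λε}` for `ε ∈ (0,1]`, `λ ∈ (0,1)`. -/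
theorem convex_combination_derivation
    {X : Type*} [NormedAddCommGroup X] [NormedSpace ℝ X] [CompleteSpace X]
    (𝒜 : Set (Set X)) (hopen : ∀ A ∈ 𝒜, IsOpen A)
    (htrans : ∀ A ∈ 𝒜, ∀ v : X, (fun x => x + v) '' A ∈ 𝒜)
    (hdil : ∀ A ∈ 𝒜, ∀ t : ℝ, 0 < t → t • A ∈ 𝒜)
    (ε lam : ℝ) (hε0 : 0 < ε) (hε1 : ε ≤ 1) (hlam0 : 0 < lam) (hlam1 : lam < 1) :
    ∀ u ∈ {z ∈ Metric.closedBall (0 : X) 1 | ∀ A ∈ 𝒜, z ∈ A →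
        ENNReal.ofReal ε ≤ EMetric.diam (A ∩ Metric.closedBall (0 : X) 1)},
      ∀ b ∈ Metric.closedBall (0 : X) 1,
        lam • u + (1 - lam) • b ∈
          {z ∈ Metric.closedBall (0 : X) 1 | ∀ A ∈ 𝒜, z ∈ A →
            ENNReal.ofReal (lam * ε) ≤ EMetric.diam (A ∩ Metric.closedBall (0 : X) 1)} := by
  rintro u ⟨huB, hu⟩ b hb
  set c : X := (1 - lam) • b with hc
  set z : X := lam • u + c with hz
  have hzB : z ∈ Metric.closedBall (0 : X) 1 :=
    convex_closedBall (0 : X) 1 huB hb hlam0.le (by linarith) (by ring)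
  refine ⟨hzB, ?_⟩
  intro A hA hzA
  set A₁ : Set X := (fun x => x + (-c)) '' A with hA₁
  have hA₁mem : A₁ ∈ 𝒜 := htrans A hA (-c)
  set A' : Set X := lam⁻¹ • A₁ with hA'
  have hA'mem : A' ∈ 𝒜 := hdil A₁ hA₁mem lam⁻¹ (by positivity)
  have huA' : u ∈ A' := by
    refine Set.mem_smul_set.2 ⟨z + (-c), ⟨z, hzA, rfl⟩, ?_⟩
    simp [hz, smul_smul, inv_mul_cancel₀ hlam0.ne']
  have key : ENNReal.ofReal ε ≤
      EMetric.diam (A' ∩ Metric.closedBall (0 : X) 1) := hu A' hA'mem huA'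
  have hmap : ∀ x ∈ A' ∩ Metric.closedBall (0 : X) 1,
      lam • x + c ∈ A ∩ Metric.closedBall (0 : X) 1 := by
    rintro x ⟨hxA', hxB⟩
    obtain ⟨y, hy, rfl⟩ := Set.mem_smul_set.1 hxA'
    obtain ⟨a, ha, rfl⟩ := hy
    constructor
    · have : lam • (lam⁻¹ • (a + -c)) + c = a := by
        rw [smul_smul, mul_inv_cancel₀ hlam0.ne', one_smul]
        abel
      rw [this]; exact ha
    · exact convex_closedBall (0 : X) 1 hxB hb hlam0.le (by linarith) (by ring)
  have hedist : ∀ x y : X, edist (lam • x + c) (lam • y + c)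
      = ENNReal.ofReal lam * edist x y := by
    intro x y
    rw [edist_add_right, edist_smul₀]
    rw [Real.nnnorm_of_nonneg hlam0.le, ENNReal.ofReal, ENNReal.smul_def, smul_eq_mul, Real.toNNReal_of_nonneg hlam0.le]
  set D := EMetric.diam (A ∩ Metric.closedBall (0 : X) 1) with hD
  have hlamne : ENNReal.ofReal lam ≠ 0 := by
    simp [ENNReal.ofReal_eq_zero, not_le, hlam0]
  have hlamnetop : ENNReal.ofReal lam ≠ ⊤ := ENNReal.ofReal_ne_top
  have hdiam : EMetric.diam (A' ∩ Metric.closedBall (0 : X) 1)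
      ≤ D / ENNReal.ofReal lam := by
    refine EMetric.diam_le ?_
    intro x hx y hy
    rw [ENNReal.le_div_iff_mul_le (Or.inl hlamne) (Or.inl hlamnetop), mul_comm,
      ← hedist]
    exact EMetric.edist_le_diam_of_mem (hmap x hx) (hmap y hy)
  calc ENNReal.ofReal (lam * ε) = ENNReal.ofReal lam * ENNReal.ofReal ε := by
        rw [ENNReal.ofReal_mul hlam0.le]
    _ ≤ ENNReal.ofReal lam * (D / ENNReal.ofReal lam) := by
        exact mul_le_mul_right (key.trans hdiam) _
    _ = D := ENNReal.mul_div_cancel hlamne hlamnetop
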